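/- Let α > 0 and define f_α : (0,∞) → ℝ by f_α(t) = π √(α/Γ(α)) · t^{α−1} · e^{−t²/2}/√(2π), and f̂_α : ℝ → ℂ by f̂_α(y) = √(2/π) ∫_0^∞ f_α(t) e^{i y t} dt. Then f̂_α(y) ≠ 0 for every y ∈ ℝ. -/

import Mathlib

open MeasureTheory

noncomputable def falpha (α t : ℝ) : ℝ :=
  Real.pi * Real.sqrt (α / Real.Gamma α) * t ^ (α - 1) * (Real.exp (-t ^ 2 / 2) / Real.sqrt (2 * Real.pi))
noncomputable def fhatalpha (α : ℝ) (y : ℝ) : ℂ :=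
  (Real.sqrt (2 / Real.pi) : ℂ)
    * ∫ t in Set.Ioi (0 : ℝ), (falpha α t : ℂ) * Complex.exp (Complex.I * y * t)

open Set Complex Filter


noncomputable def Jfun (β y : ℝ) : ℂ :=
  ∫ t in Set.Ioi (0:ℝ), ((t ^ β * Real.exp (-t ^ 2 / 2) : ℝ) : ℂ) * Complex.exp (Complex.I * y * t)

lemma Ireal (β : ℝ) (hβ : -1 < β) :
    IntegrableOn (fun t : ℝ => t ^ β * Real.exp (-t ^ 2 / 2)) (Ioi 0) := by
  have h := integrableOn_rpow_mul_exp_neg_mul_sq (by norm_num : (0:ℝ) < 1/2) hβ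
  exact h.congr_fun (fun t _ => by beta_reduce; rw [show -(1/2:ℝ) * t ^ 2 = -t ^ 2 / 2 from by ring]) measurableSet_Ioi

lemma normexp (y t : ℝ) : ‖Complex.exp (Complex.I * y * t)‖ = 1 := by
  simp [Complex.norm_exp]

lemma contOnK (β y : ℝ) :
    ContinuousOn (fun t : ℝ => ((t ^ β * Real.exp (-t ^ 2 / 2) : ℝ) : ℂ)
      * Complex.exp (Complex.I * y * t)) (Ioi 0) := by
  apply ContinuousOn.mul
  · apply Complex.continuous_ofReal.comp_continuousOn
    apply ContinuousOn.mul
    · exact fun t ht => (Real.continuousAt_rpow_const t β (Or.inl (ne_of_gt ht))).continuousWithinAt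
    · exact (Real.continuous_exp.comp (by continuity)).continuousOn
  · exact (Complex.continuous_exp.comp (by continuity)).continuousOn

lemma key_int (β y : ℝ) (hβ : -1 < β) :
    IntegrableOn (fun t : ℝ => ((t ^ β * Real.exp (-t ^ 2 / 2) : ℝ) : ℂ)
      * Complex.exp (Complex.I * y * t)) (Ioi 0) := by
  refine Integrable.mono' (Ireal β hβ).norm
    ((contOnK β y).aestronglyMeasurable measurableSet_Ioi) (Filter.Eventually.of_forall fun t => ?_)
  rw [norm_mul, normexp, mul_one, Complex.norm_real]

lemma hasDerivAt_J (β : ℝ) (hβ : -1 < β) (y : ℝ) :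
    HasDerivAt (Jfun β) (Complex.I * Jfun (β + 1) y) y := by
  have hβ1 : (-1:ℝ) < β + 1 := by linarith
  have main := hasDerivAt_integral_of_dominated_loc_of_deriv_le
    (F := fun (x : ℝ) (t : ℝ) => ((t ^ β * Real.exp (-t ^ 2 / 2) : ℝ) : ℂ)
      * Complex.exp (Complex.I * x * t))
    (F' := fun (x : ℝ) (t : ℝ) => (Complex.I * t) * (((t ^ β * Real.exp (-t ^ 2 / 2) : ℝ) : ℂ)
      * Complex.exp (Complex.I * x * t)))
    (bound := fun t => |t ^ (β+1) * Real.exp (-t ^ 2 / 2)|)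
    (μ := volume.restrict (Ioi 0)) (x₀ := y) (Metric.ball_mem_nhds y one_pos)
    (Filter.Eventually.of_forall fun x => ((contOnK β x).aestronglyMeasurable measurableSet_Ioi))
    (key_int β y hβ)
    (((continuous_const.mul Complex.continuous_ofReal).aestronglyMeasurable).mul
      ((contOnK β y).aestronglyMeasurable measurableSet_Ioi))
    ?_ ((Ireal (β+1) hβ1).abs) ?_
  · have h2 : (∫ t in Ioi (0:ℝ), (Complex.I * t) * (((t ^ β * Real.exp (-t ^ 2 / 2) : ℝ) : ℂ)
        * Complex.exp (Complex.I * y * t))) = Complex.I * Jfun (β+1) y := by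
      have : ∀ t : ℝ, (Complex.I * t) * (((t ^ β * Real.exp (-t ^ 2 / 2) : ℝ) : ℂ)
          * Complex.exp (Complex.I * y * t))
          = Complex.I * (((t * (t ^ β * Real.exp (-t ^ 2 / 2)) : ℝ) : ℂ)
          * Complex.exp (Complex.I * y * t)) := by
        intro t; push_cast; ring
      simp_rw [this]
      rw [integral_const_mul]
      unfold Jfun
      congr 1
      apply setIntegral_congr_fun measurableSet_Ioi
      intro t ht
      simp only [Real.rpow_add_one (ne_of_gt ht)]
      push_cast; ring_nf
    rw [← h2]
    exact main.2
  · filter_upwards [ae_restrict_mem measurableSet_Ioi] with t ht x _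
    rw [norm_mul, norm_mul, norm_mul, normexp, Complex.norm_I, one_mul, mul_one,
      Complex.norm_real, Real.norm_eq_abs, Complex.norm_real, Real.norm_eq_abs, ← abs_mul]
    apply le_of_eq
    congr 1
    rw [Real.rpow_add_one (ne_of_gt ht)]
    ring
  · refine Filter.Eventually.of_forall fun t => fun x _ => ?_
    have h0 : HasDerivAt (fun x : ℝ => Complex.I * x * t) (Complex.I * t) x := by
      simpa using ((Complex.ofRealCLM.hasDerivAt (x := x)).const_mul Complex.I).mul_const (t:ℂ)
    have h1 := h0.cexp
    have h2 := h1.const_mul ((t ^ β * Real.exp (-t ^ 2 / 2) : ℝ) : ℂ)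
    refine h2.congr_deriv ?_
    ring

lemma ode (α : ℝ) (hα : 0 < α) (y : ℝ) :
    Jfun (α+1) y = (α:ℂ) * Jfun (α-1) y + Complex.I * y * Jfun α y := by
  set φ : ℝ → ℂ := fun t => ((t ^ α * Real.exp (-t ^ 2 / 2) : ℝ) : ℂ)
    * Complex.exp (Complex.I * y * t) with hφdef
  set ψ : ℝ → ℂ := fun t =>
      (α:ℂ) * (((t ^ (α-1) * Real.exp (-t ^ 2 / 2) : ℝ) : ℂ) * Complex.exp (Complex.I * y * t))
    + Complex.I * y * (((t ^ α * Real.exp (-t ^ 2 / 2) : ℝ) : ℂ) * Complex.exp (Complex.I * y * t))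
    - (((t ^ (α+1) * Real.exp (-t ^ 2 / 2) : ℝ) : ℂ) * Complex.exp (Complex.I * y * t)) with hψdef
  have h1 : (-1:ℝ) < α - 1 := by linarith
  have h2 : (-1:ℝ) < α := by linarith
  have h3 : (-1:ℝ) < α + 1 := by linarith
  have hint1 := key_int (α-1) y h1
  have hint2 := key_int α y h2
  have hint3 := key_int (α+1) y h3
  have hψint : IntegrableOn ψ (Ioi 0) :=
    ((hint1.const_mul _).add (hint2.const_mul _)).sub hint3
  -- FTC
  have hcont : ContinuousWithinAt φ (Ici 0) 0 := by
    apply ContinuousAt.continuousWithinAt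
    apply ContinuousAt.mul
    · apply Complex.continuous_ofReal.continuousAt.comp
      exact ((Real.continuousAt_rpow_const 0 α (Or.inr hα.le))).mul
        ((Real.continuous_exp.comp (by continuity)).continuousAt)
    · exact (Complex.continuous_exp.comp (by continuity)).continuousAt
  have hderiv : ∀ t ∈ Ioi (0:ℝ), HasDerivAt φ (ψ t) t := by
    intro t ht
    have hrpow : HasDerivAt (fun t : ℝ => t ^ α) (α * t ^ (α-1)) t :=
      Real.hasDerivAt_rpow_const (Or.inl (ne_of_gt ht))
    have hsq : HasDerivAt (fun t : ℝ => -t ^ 2 / 2) (-t) t := by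
      have h := (hasDerivAt_pow 2 t).neg.div_const 2
      refine h.congr_deriv ?_
      push_cast; ring
    have hexp := hsq.exp
    have hr : HasDerivAt (fun t : ℝ => t ^ α * Real.exp (-t ^ 2 / 2))
        (α * t ^ (α-1) * Real.exp (-t ^ 2 / 2) + t ^ α * (Real.exp (-t ^ 2 / 2) * -t)) t :=
      hrpow.mul hexp
    have hcarg : HasDerivAt (fun t : ℝ => Complex.I * y * t) (Complex.I * y) t := by
      simpa using ((Complex.ofRealCLM.hasDerivAt (x := t)).const_mul (Complex.I * y))
    have hce := hcarg.cexp
    have := (hr.ofReal_comp).mul hce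
    refine this.congr_deriv ?_
    rw [hψdef]
    simp only
    rw [Real.rpow_add_one (ne_of_gt ht)]
    push_cast
    ring
  have htop : Tendsto φ atTop (nhds 0) := by
    rw [tendsto_zero_iff_norm_tendsto_zero]
    have h0 : Tendsto (fun x : ℝ => Real.exp (-(1/2) * x)) atTop (nhds 0) := by
      apply Real.tendsto_exp_atBot.comp
      have : Tendsto (fun x : ℝ => x * (-(1/2))) atTop atBot :=
        Filter.Tendsto.atTop_mul_const_of_neg (by norm_num) tendsto_id
      exact this.congr (fun x => by ring)
    have hlo := (rpow_mul_exp_neg_mul_sq_isLittleO_exp_neg one_half_pos α).trans_tendsto h0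
    have : Tendsto (fun t : ℝ => |t ^ α * Real.exp (-t ^ 2 / 2)|) atTop (nhds 0) := by
      have habs := hlo.abs
      rw [abs_zero] at habs
      exact habs.congr (fun t => by rw [show -(1/2:ℝ) * t ^ 2 = -t ^ 2 / 2 from by ring])
    apply this.congr'
    filter_upwards [eventually_ge_atTop (0:ℝ)] with t _
    rw [hφdef]
    simp only
    rw [norm_mul, normexp, mul_one, Complex.norm_real, Real.norm_eq_abs]
  have hFTC := integral_Ioi_of_hasDerivAt_of_tendsto hcont hderiv hψint htop
  have hφ0 : φ 0 = 0 := by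
    rw [hφdef]; simp [Real.zero_rpow (ne_of_gt hα)]
  rw [hφ0, sub_zero] at hFTC
  -- expand the integral of ψ
  rw [hψdef] at hFTC
  beta_reduce at hFTC
  have hadd : IntegrableOn (fun t : ℝ =>
      (α:ℂ) * (((t ^ (α-1) * Real.exp (-t ^ 2 / 2) : ℝ) : ℂ) * Complex.exp (Complex.I * y * t))
      + Complex.I * y * (((t ^ α * Real.exp (-t ^ 2 / 2) : ℝ) : ℂ) * Complex.exp (Complex.I * y * t)))
      (Ioi 0) := (hint1.const_mul _).add (hint2.const_mul _)
  rw [integral_sub hadd hint3,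
    integral_add (hint1.const_mul ((α : ℂ))) (hint2.const_mul (Complex.I * y)),
    integral_const_mul, integral_const_mul] at hFTC
  have : Jfun (α+1) y - ((α:ℂ) * Jfun (α-1) y + Complex.I * y * Jfun α y) = 0 := by
    unfold Jfun
    rw [← neg_eq_zero, ← hFTC]
    ring
  linear_combination this


lemma J_zero (β : ℝ) :
    Jfun β 0 = ((∫ t in Ioi (0:ℝ), t ^ β * Real.exp (-t ^ 2 / 2)) : ℝ) := by
  unfold Jfun
  simp only [Complex.ofReal_zero, mul_zero, zero_mul, Complex.exp_zero, mul_one]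
  exact integral_ofReal

lemma cpos (β : ℝ) (hβ : -1 < β) : 0 < ∫ t in Ioi (0:ℝ), t ^ β * Real.exp (-t ^ 2 / 2) := by
  rw [setIntegral_pos_iff_support_of_nonneg_ae ?_ (Ireal β hβ)]
  · have hsub : Ioi (0:ℝ) ⊆ Function.support (fun t : ℝ => t ^ β * Real.exp (-t ^ 2 / 2)) := by
      intro t ht
      exact ne_of_gt (mul_pos (Real.rpow_pos_of_pos ht β) (Real.exp_pos _))
    refine lt_of_lt_of_le ?_ (measure_mono (subset_inter hsub Subset.rfl))
    rw [Real.volume_Ioi]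
    exact ENNReal.zero_lt_top
  · filter_upwards [ae_restrict_mem measurableSet_Ioi] with t ht
    exact mul_nonneg (Real.rpow_nonneg (le_of_lt ht) β) (Real.exp_pos _).le

lemma Jne (α : ℝ) (hα : 0 < α) (y : ℝ) : Jfun (α-1) y ≠ 0 := by
  have h1 : (-1:ℝ) < α - 1 := by linarith
  have h2 : (-1:ℝ) < α := by linarith
  set v : ℝ → ℂ := fun x => Complex.I * Jfun α x with hvdef
  have hu : ∀ x, HasDerivAt (Jfun (α-1)) (v x) x := by
    intro x
    have h := hasDerivAt_J (α-1) h1 x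
    rwa [sub_add_cancel] at h
  have hv : ∀ x, HasDerivAt v (-(α:ℂ) * Jfun (α-1) x - x * v x) x := by
    intro x
    have h := (hasDerivAt_J α h2 x).const_mul Complex.I
    refine h.congr_deriv ?_
    rw [show Complex.I * (Complex.I * Jfun (α+1) x) = -Jfun (α+1) x by
      rw [← mul_assoc, Complex.I_mul_I]; ring, ode α hα x]
    ring
  set W : ℝ → ℂ := fun x => star (Jfun (α-1) x) * v x - Jfun (α-1) x * star (v x) with hWdef
  have hW : ∀ x : ℝ, HasDerivAt W (-(x:ℂ) * W x) x := by
    intro x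
    have h := (((hu x).star.mul (hv x))).sub ((hu x).mul (hv x).star)
    refine h.congr_deriv ?_
    have hstar : star (-(α:ℂ) * Jfun (α-1) x - (x:ℂ) * v x)
        = -(α:ℂ) * star (Jfun (α-1) x) - (x:ℂ) * star (v x) := by
      simp [star_sub, star_mul', Complex.star_def, map_mul, map_neg, Complex.conj_ofReal]
    rw [hstar, hWdef]
    ring
  set H : ℝ → ℂ := fun x => W x * ((Real.exp (x ^ 2 / 2) : ℝ) : ℂ) with hHdef
  have hH : ∀ x, HasDerivAt H 0 x := by
    intro x
    have hr : HasDerivAt (fun x : ℝ => Real.exp (x ^ 2 / 2)) (Real.exp (x ^ 2 / 2) * x) x := by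
      have h := ((hasDerivAt_pow 2 x).div_const 2).exp
      convert h using 1
      push_cast; ring
    have h := (hW x).mul hr.ofReal_comp
    refine h.congr_deriv ?_
    push_cast
    ring
  have hconst : ∀ x, H x = H 0 := fun x =>
    is_const_of_deriv_eq_zero (fun z => (hH z).differentiableAt) (fun z => (hH z).deriv) x 0
  -- compute H 0 = W 0
  set c1 := ∫ t in Ioi (0:ℝ), t ^ (α-1) * Real.exp (-t ^ 2 / 2) with hc1
  set c2 := ∫ t in Ioi (0:ℝ), t ^ α * Real.exp (-t ^ 2 / 2) with hc2
  have hW0 : W 0 = 2 * (c1:ℂ) * c2 * Complex.I := by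
    rw [hWdef]
    simp only [hvdef, J_zero, ← hc1, ← hc2]
    simp [Complex.star_def, map_mul, Complex.conj_I, Complex.conj_ofReal]
    ring
  have hH0 : H 0 ≠ 0 := by
    rw [hHdef]
    simp only
    rw [hW0]
    apply mul_ne_zero
    · apply mul_ne_zero
      apply mul_ne_zero
      apply mul_ne_zero
      · norm_num
      · exact_mod_cast ne_of_gt (cpos (α-1) h1)
      · exact_mod_cast ne_of_gt (cpos α h2)
      · exact Complex.I_ne_zero
    · exact_mod_cast ne_of_gt (Real.exp_pos _)
  intro h0
  have hWy : W y = 0 := by rw [hWdef]; simp [h0]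
  have : H y = 0 := by rw [hHdef]; simp [hWy]
  rw [hconst y] at this
  exact hH0 this

theorem fhatalpha_ne_zero (α : ℝ) (hα : 0 < α) (y : ℝ) : fhatalpha α y ≠ 0 := by
  have hΓ : 0 < Real.Gamma α := Real.Gamma_pos_of_pos hα
  set C : ℝ := Real.pi * Real.sqrt (α / Real.Gamma α) / Real.sqrt (2 * Real.pi) with hC
  have hCpos : 0 < C := by
    apply div_pos
    · exact mul_pos Real.pi_pos (Real.sqrt_pos.mpr (div_pos hα hΓ))
    · exact Real.sqrt_pos.mpr (mul_pos two_pos Real.pi_pos)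
  have hint : (∫ t in Set.Ioi (0 : ℝ), (falpha α t : ℂ) * Complex.exp (Complex.I * y * t))
      = (C : ℂ) * Jfun (α-1) y := by
    unfold Jfun
    rw [← integral_const_mul]
    congr 1
    funext t
    unfold falpha
    rw [hC]
    push_cast
    ring
  unfold fhatalpha
  rw [hint]
  apply mul_ne_zero
  · exact_mod_cast ne_of_gt (Real.sqrt_pos.mpr (div_pos two_pos Real.pi_pos))
  · exact mul_ne_zero (by exact_mod_cast ne_of_gt hCpos) (Jne α hα y)
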